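/- Let X be a square-integrable random vector in R^d, X' an independent copy, Y = E[X|F] and Y' = E[X'|F']. Then ‖E[XX^T]‖_F^2 - ‖E[YY^T]‖_F^2 = E[(⟨X,X'⟩ - ⟨Y,Y'⟩)^2]. -/

import Mathlib

open MeasureTheory Matrix

section Aux

variable {Ω : Type*} {mΩ : MeasurableSpace Ω} {μ : Measure Ω}

/-- Product of two L² functions is integrable. -/
lemma aux_integrable_mul {f g : Ω → ℝ} (hf : MemLp f 2 μ) (hg : MemLp g 2 μ) :
    Integrable (fun ω => f ω * g ω) μ := by
  refine ((hf.integrable_sq.add hg.integrable_sq).div_const 2).mono'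
    (hf.aestronglyMeasurable.mul hg.aestronglyMeasurable) ?_
  filter_upwards with ω
  simp only [Pi.add_apply, Pi.div_apply, Real.norm_eq_abs, abs_mul]
  nlinarith [sq_nonneg (|f ω| - |g ω|), sq_abs (f ω), sq_abs (g ω)]

/-- The conditional expectation of an L² function is L². -/
lemma aux_memℒp_condexp {m : MeasurableSpace Ω} (hm : m ≤ mΩ) [IsFiniteMeasure μ]
    {f : Ω → ℝ} (hf : MemLp f 2 μ) : MemLp (μ[f|m]) 2 μ := by
  have hcoe : (hf.toLp f : Ω → ℝ) =ᵐ[μ] f := hf.coeFn_toLp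
  set g : Lp ℝ 2 μ := (condExpL2 ℝ ℝ hm (hf.toLp f)).1 with hg
  have h : (g : Ω → ℝ) =ᵐ[μ] μ[f|m] := by
    refine ae_eq_condExp_of_forall_setIntegral_eq hm (hf.integrable one_le_two)
      (fun s _ hμs => integrableOn_condExpL2_of_measure_ne_top hm hμs.ne _)
      (fun s hs hμs => ?_) (aestronglyMeasurable_condExpL2 hm _)
    rw [show (g : Ω → ℝ) = (condExpL2 ℝ ℝ hm (hf.toLp f) : Ω → ℝ) from rfl]
    rw [integral_condExpL2_eq hm (hf.toLp f) hs hμs.ne]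
    exact integral_congr_ae (ae_restrict_of_ae hcoe)
  exact (Lp.memLp g).ae_eq h

/-- Tower property in product form: `∫ E[g|m] * f = ∫ E[g|m] * E[f|m]`. -/
lemma aux_tower {m : MeasurableSpace Ω} (hm : m ≤ mΩ) [IsProbabilityMeasure μ]
    {f g : Ω → ℝ} (hf : MemLp f 2 μ) (hg : MemLp g 2 μ) :
    ∫ ω, (μ[g|m]) ω * f ω ∂μ = ∫ ω, (μ[g|m]) ω * (μ[f|m]) ω ∂μ := by
  have hgc : MemLp (μ[g|m]) 2 μ := aux_memℒp_condexp hm hg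
  have hint : Integrable (μ[g|m] * f) μ := aux_integrable_mul hgc hf
  have h1 : μ[μ[g|m] * f|m] =ᵐ[μ] μ[g|m] * μ[f|m] :=
    condExp_mul_of_stronglyMeasurable_left stronglyMeasurable_condExp hint (hf.integrable one_le_two)
  calc ∫ ω, (μ[g|m]) ω * f ω ∂μ = ∫ ω, (μ[g|m] * f) ω ∂μ := rfl
    _ = ∫ ω, (μ[μ[g|m] * f|m]) ω ∂μ := (integral_condExp hm).symm
    _ = ∫ ω, (μ[g|m] * μ[f|m]) ω ∂μ := integral_congr_ae h1
    _ = ∫ ω, (μ[g|m]) ω * (μ[f|m]) ω ∂μ := rfl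

/-- Integrability of the cross products on the product space. -/
lemma aux_key_int [IsProbabilityMeasure μ] {d : ℕ} (u v : Ω → Fin d → ℝ)
    (h : ∀ i j, Integrable (fun ω => u ω i * v ω j) μ) :
    Integrable (fun p : Ω × Ω => (∑ i, u p.1 i * u p.2 i) * (∑ j, v p.1 j * v p.2 j))
      (μ.prod μ) := by
  have h1 : ∀ p : Ω × Ω, (∑ i, u p.1 i * u p.2 i) * (∑ j, v p.1 j * v p.2 j)
      = ∑ i, ∑ j, (u p.1 i * v p.1 j) * (u p.2 i * v p.2 j) := by
    intro p
    rw [Finset.sum_mul_sum]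
    exact Finset.sum_congr rfl fun i _ => Finset.sum_congr rfl fun j _ => by ring
  simp only [h1]
  exact integrable_finset_sum _ fun i _ => integrable_finset_sum _ fun j _ =>
    (h i j).mul_prod (h i j)

/-- Key computation: integral of products of inner products on the product space. -/
lemma aux_key [IsProbabilityMeasure μ] {d : ℕ} (u v : Ω → Fin d → ℝ)
    (h : ∀ i j, Integrable (fun ω => u ω i * v ω j) μ) :
    ∫ p : Ω × Ω, (∑ i, u p.1 i * u p.2 i) * (∑ j, v p.1 j * v p.2 j) ∂(μ.prod μ)
      = ∑ i, ∑ j, (∫ ω, u ω i * v ω j ∂μ) ^ 2 := by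
  have h1 : ∀ p : Ω × Ω, (∑ i, u p.1 i * u p.2 i) * (∑ j, v p.1 j * v p.2 j)
      = ∑ i, ∑ j, (u p.1 i * v p.1 j) * (u p.2 i * v p.2 j) := by
    intro p
    rw [Finset.sum_mul_sum]
    exact Finset.sum_congr rfl fun i _ => Finset.sum_congr rfl fun j _ => by ring
  simp only [h1]
  rw [integral_finset_sum _ fun i _ => integrable_finset_sum _ fun j _ =>
    (h i j).mul_prod (h i j)]
  refine Finset.sum_congr rfl fun i _ => ?_
  rw [integral_finset_sum _ fun j _ => (h i j).mul_prod (h i j)]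
  refine Finset.sum_congr rfl fun j _ => ?_
  rw [integral_prod_mul (fun ω => u ω i * v ω j) (fun ω => u ω i * v ω j), sq]

end Aux

/-- Representation of the covariance increment:
`‖E[XX^T]‖_F² - ‖E[YY^T]‖_F² = E (⟨X,X'⟩ - ⟨Y,Y'⟩)²`, where `Y = E[X|F]` and
`(X',Y')` is an independent copy realized on the product space. -/
theorem stmt6 {Ω : Type*} {mΩ : MeasurableSpace Ω} (μ : Measure Ω) [IsProbabilityMeasure μ]
    (m : MeasurableSpace Ω) (hm : m ≤ mΩ) {d : ℕ}
    (X Y : Ω → Fin d → ℝ) (hX : ∀ i, MemLp (fun ω => X ω i) 2 μ)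
    (hY : ∀ i, (fun ω => Y ω i) = μ[fun ω => X ω i | m]) :
    ((Matrix.of fun i j => ∫ ω, X ω i * X ω j ∂μ) *
        (Matrix.of fun i j => ∫ ω, X ω i * X ω j ∂μ)ᵀ).trace -
    ((Matrix.of fun i j => ∫ ω, Y ω i * Y ω j ∂μ) *
        (Matrix.of fun i j => ∫ ω, Y ω i * Y ω j ∂μ)ᵀ).trace
      = ∫ p, ((∑ i, X p.1 i * X p.2 i) - ∑ i, Y p.1 i * Y p.2 i) ^ 2
          ∂(@Measure.prod Ω Ω mΩ mΩ μ μ) := by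
  have hYℒp : ∀ i, MemLp (fun ω => Y ω i) 2 μ := fun i => by
    rw [hY i]; exact aux_memℒp_condexp hm (hX i)
  -- integrability of all pairwise products
  have hXX : ∀ i j, Integrable (fun ω => X ω i * X ω j) μ :=
    fun i j => aux_integrable_mul (hX i) (hX j)
  have hXY : ∀ i j, Integrable (fun ω => X ω i * Y ω j) μ :=
    fun i j => aux_integrable_mul (hX i) (hYℒp j)
  have hYX : ∀ i j, Integrable (fun ω => Y ω i * X ω j) μ :=
    fun i j => aux_integrable_mul (hYℒp i) (hX j)
  have hYY : ∀ i j, Integrable (fun ω => Y ω i * Y ω j) μ :=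
    fun i j => aux_integrable_mul (hYℒp i) (hYℒp j)
  -- tower property: ∫ X i * Y j = ∫ Y i * Y j and ∫ Y i * X j = ∫ Y i * Y j
  have tower1 : ∀ i j, (∫ ω, Y ω i * X ω j ∂μ) = ∫ ω, Y ω i * Y ω j ∂μ := by
    intro i j
    have := aux_tower (μ := μ) hm (f := fun ω => X ω j) (g := fun ω => X ω i) (hX j) (hX i)
    rw [← hY i, ← hY j] at this
    exact this
  have tower2 : ∀ i j, (∫ ω, X ω i * Y ω j ∂μ) = ∫ ω, Y ω i * Y ω j ∂μ := by
    intro i j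
    have h1 : (∫ ω, X ω i * Y ω j ∂μ) = ∫ ω, Y ω j * X ω i ∂μ := by
      congr 1; funext ω; ring
    have := aux_tower (μ := μ) hm (f := fun ω => X ω i) (g := fun ω => X ω j) (hX i) (hX j)
    rw [← hY j, ← hY i] at this
    rw [h1, this]
    congr 1; funext ω; ring
  -- expand the square on the product space
  have hexp : ∀ p : Ω × Ω,
      ((∑ i, X p.1 i * X p.2 i) - ∑ i, Y p.1 i * Y p.2 i) ^ 2
        = ((∑ i, X p.1 i * X p.2 i) * (∑ j, X p.1 j * X p.2 j)
            - (∑ i, X p.1 i * X p.2 i) * (∑ j, Y p.1 j * Y p.2 j))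
          - ((∑ i, Y p.1 i * Y p.2 i) * (∑ j, X p.1 j * X p.2 j)
            - (∑ i, Y p.1 i * Y p.2 i) * (∑ j, Y p.1 j * Y p.2 j)) := by
    intro p; ring
  have hIXX := aux_key_int X X hXX
  have hIXY := aux_key_int X Y hXY
  have hIYX := aux_key_int Y X hYX
  have hIYY := aux_key_int Y Y hYY
  have hRHS : ∫ p, ((∑ i, X p.1 i * X p.2 i) - ∑ i, Y p.1 i * Y p.2 i) ^ 2
          ∂(@Measure.prod Ω Ω mΩ mΩ μ μ)
      = (∑ i, ∑ j, (∫ ω, X ω i * X ω j ∂μ) ^ 2)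
        - (∑ i, ∑ j, (∫ ω, X ω i * Y ω j ∂μ) ^ 2)
        - ((∑ i, ∑ j, (∫ ω, Y ω i * X ω j ∂μ) ^ 2)
          - ∑ i, ∑ j, (∫ ω, Y ω i * Y ω j ∂μ) ^ 2) := by
    have hA : Integrable (fun p : Ω × Ω =>
        (∑ i, X p.1 i * X p.2 i) * (∑ j, X p.1 j * X p.2 j)
          - (∑ i, X p.1 i * X p.2 i) * (∑ j, Y p.1 j * Y p.2 j)) (@Measure.prod Ω Ω mΩ mΩ μ μ) := hIXX.sub hIXY
    have hB : Integrable (fun p : Ω × Ω =>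
        (∑ i, Y p.1 i * Y p.2 i) * (∑ j, X p.1 j * X p.2 j)
          - (∑ i, Y p.1 i * Y p.2 i) * (∑ j, Y p.1 j * Y p.2 j)) (@Measure.prod Ω Ω mΩ mΩ μ μ) := hIYX.sub hIYY
    simp only [hexp]
    rw [integral_sub hA hB, integral_sub hIXX hIXY,
      integral_sub hIYX hIYY, aux_key X X hXX, aux_key X Y hXY, aux_key Y X hYX,
      aux_key Y Y hYY]
  rw [hRHS]
  have htrX : ((Matrix.of fun i j => ∫ ω, X ω i * X ω j ∂μ) *
        (Matrix.of fun i j => ∫ ω, X ω i * X ω j ∂μ)ᵀ).trace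
      = ∑ i, ∑ j, (∫ ω, X ω i * X ω j ∂μ) ^ 2 := by
    simp only [Matrix.trace, Matrix.diag, Matrix.mul_apply, Matrix.transpose_apply,
      Matrix.of_apply, sq]
  have htrY : ((Matrix.of fun i j => ∫ ω, Y ω i * Y ω j ∂μ) *
        (Matrix.of fun i j => ∫ ω, Y ω i * Y ω j ∂μ)ᵀ).trace
      = ∑ i, ∑ j, (∫ ω, Y ω i * Y ω j ∂μ) ^ 2 := by
    simp only [Matrix.trace, Matrix.diag, Matrix.mul_apply, Matrix.transpose_apply,
      Matrix.of_apply, sq]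
  rw [htrX, htrY]
  have e1 : (∑ i, ∑ j, (∫ ω, X ω i * Y ω j ∂μ) ^ 2)
      = ∑ i, ∑ j, (∫ ω, Y ω i * Y ω j ∂μ) ^ 2 := by
    exact Finset.sum_congr rfl fun i _ => Finset.sum_congr rfl fun j _ => by rw [tower2]
  have e2 : (∑ i, ∑ j, (∫ ω, Y ω i * X ω j ∂μ) ^ 2)
      = ∑ i, ∑ j, (∫ ω, Y ω i * Y ω j ∂μ) ^ 2 := by
    exact Finset.sum_congr rfl fun i _ => Finset.sum_congr rfl fun j _ => by rw [tower1]
  rw [e1, e2]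
  ring
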